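/- (Konyagin–Shkredov) Let q be a prime power, ψ the canonical additive character of F_q, and X1 ⊆ X ⊆ F_q finite nonempty sets. Then (1/q) Σ_{y ∈ F_q} |Σ_{x ∈ X} ψ(x y)| ≥ |X1|² / (|X|^{1/2} · E(X1)^{1/2}), where E(X1) is the additive energy of X1. -/

import Mathlib

open Finset

/-- The canonical additive character `ψ(x) = e^{2πi Tr(x)/p}` of a finite
field `F` of characteristic `p`. -/
noncomputable def canonChar (p : ℕ) (F : Type*) [Field F] [Fintype F]
    [Algebra (ZMod p) F] (x : F) : ℂ :=
  Complex.exp (2 * Real.pi * Complex.I *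
    ((Algebra.trace (ZMod p) F x).val : ℂ) / p)

/-- Additive energy of a finite subset of `F`. -/
def addEnergy {F : Type*} [AddCommGroup F] [DecidableEq F] (Z : Finset F) : ℕ :=
  (((Z ×ˢ Z) ×ˢ (Z ×ˢ Z)).filter (fun z => z.1.1 + z.2.1 = z.1.2 + z.2.2)).card

set_option linter.unusedSectionVars false

section aux
variable (p : ℕ) [Fact p.Prime] (F : Type*) [Field F] [Fintype F] [Algebra (ZMod p) F]

lemma cast_div_aux (A q r k : ℂ) (hq : q ≠ 0) :
    A * (r + q * k) / q = A * r / q + k * A := by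
  field_simp

lemma exp_mod (m : ℕ) :
    Complex.exp (2 * Real.pi * Complex.I * ((m % p : ℕ) : ℂ) / p) =
    Complex.exp (2 * Real.pi * Complex.I * (m : ℂ) / p) := by
  have hp0 : (p : ℂ) ≠ 0 := by
    exact_mod_cast (Fact.out (p := p.Prime)).pos.ne'
  have hm : (m : ℂ) = ((m % p : ℕ) : ℂ) + (p:ℂ) * ((m / p : ℕ) : ℂ) := by
    have h := Nat.mod_add_div m p
    exact_mod_cast (congrArg (Nat.cast : ℕ → ℂ) h).symm
  rw [hm, cast_div_aux _ _ _ _ hp0, Complex.exp_add]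
  rw [show (((m / p : ℕ):ℂ)) = (((m / p : ℕ) : ℤ) : ℂ) from (Int.cast_natCast _).symm]
  rw [Complex.exp_int_mul_two_pi_mul_I]
  ring

lemma canonChar_add (a b : F) :
    canonChar p F (a + b) = canonChar p F a * canonChar p F b := by
  unfold canonChar
  rw [← Complex.exp_add, map_add, ZMod.val_add, exp_mod]
  congr 1
  push_cast
  field_simp

lemma canonChar_zero : canonChar p F 0 = 1 := by
  unfold canonChar
  simp

noncomputable def canonAddChar : AddChar F ℂ :=
  { toFun := canonChar p F,
    map_zero_eq_one' := canonChar_zero p F,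
    map_add_eq_mul' := canonChar_add p F }

lemma canonAddChar_apply (x : F) : canonAddChar p F x = canonChar p F x := rfl

lemma abs_canonChar (x : F) : ‖canonChar p F x‖ = 1 := by
  unfold canonChar
  rw [show 2 * (Real.pi:ℂ) * Complex.I * ((Algebra.trace (ZMod p) F x).val : ℂ) / p
      = ((2 * Real.pi * ((Algebra.trace (ZMod p) F x).val : ℝ) / p : ℝ) : ℂ) * Complex.I by
    push_cast; ring]
  exact Complex.norm_exp_ofReal_mul_I _

lemma conj_canonChar (x : F) :
    (starRingEnd ℂ) (canonChar p F x) = canonChar p F (-x) := by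
  rw [← Complex.inv_eq_conj (abs_canonChar p F x)]
  rw [← canonAddChar_apply, ← canonAddChar_apply, ← AddChar.map_neg_eq_inv]

lemma canonAddChar_ne_one : canonAddChar p F ≠ 1 := by
  haveI : FiniteDimensional (ZMod p) F := Module.Finite.of_finite
  obtain ⟨a, ha⟩ := Algebra.trace_surjective (ZMod p) F 1
  rw [AddChar.ne_one_iff]
  refine ⟨a, ?_⟩
  rw [canonAddChar_apply]
  unfold canonChar
  rw [ha, ZMod.val_one]
  intro h
  rw [Complex.exp_eq_one_iff] at h
  obtain ⟨n, hn⟩ := h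
  have hp0 : (p : ℂ) ≠ 0 := by
    exact_mod_cast (Fact.out (p := p.Prime)).pos.ne'
  have h2 : (2 * (Real.pi:ℂ) * Complex.I) ≠ 0 := by
    simp [Real.pi_ne_zero, Complex.I_ne_zero]
  have : (1 : ℂ) = n * p := by
    have h1 : (2 * (Real.pi:ℂ) * Complex.I) * 1 = (2 * (Real.pi:ℂ) * Complex.I) * ((n:ℂ) * p) := by
      field_simp at hn
      linear_combination (2 * (Real.pi:ℂ) * Complex.I) * hn
    exact mul_left_cancel₀ h2 h1
  have : ((1 : ℤ) : ℂ) = ((n * p : ℤ) : ℂ) := by push_cast; exact this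
  have h3 : (1 : ℤ) = n * p := by exact_mod_cast this
  have : (p : ℤ) ∣ 1 := Dvd.intro n (by linarith)
  have := Int.le_of_dvd one_pos this
  have hp2 := (Fact.out (p := p.Prime)).two_le
  omega

lemma canonChar_sum_eq [DecidableEq F] (t : F) :
    ∑ y : F, canonChar p F (y * t) = if t = 0 then (Fintype.card F : ℂ) else 0 := by
  classical
  have hprim : (canonAddChar p F).IsPrimitive :=
    AddChar.IsPrimitive.of_ne_one (canonAddChar_ne_one p F)
  simpa [canonAddChar_apply] using AddChar.sum_mulShift (ψ := canonAddChar p F) t hprim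


variable [DecidableEq F]

lemma sum_prod_conj (A B : Finset F) (hBA : B ⊆ A) :
    ∑ y : F, ((∑ x ∈ A, canonChar p F (x * y)) *
      (starRingEnd ℂ) (∑ x ∈ B, canonChar p F (x * y))) =
    (Fintype.card F : ℂ) * B.card := by
  have expand : ∀ y : F, (∑ x ∈ A, canonChar p F (x * y)) *
      (starRingEnd ℂ) (∑ x ∈ B, canonChar p F (x * y)) =
      ∑ a ∈ A, ∑ b ∈ B, canonChar p F ((a - b) * y) := by
    intro y
    rw [map_sum, Finset.sum_mul_sum]
    refine Finset.sum_congr rfl fun a _ => Finset.sum_congr rfl fun b _ => ?_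
    rw [conj_canonChar, ← canonChar_add]
    congr 1
    ring
  simp_rw [expand]
  rw [Finset.sum_comm]
  have swap2 : ∀ a ∈ A, ∑ y : F, ∑ b ∈ B, canonChar p F ((a - b) * y)
      = ∑ b ∈ B, if a = b then (Fintype.card F : ℂ) else 0 := by
    intro a _
    rw [Finset.sum_comm]
    refine Finset.sum_congr rfl fun b _ => ?_
    simp_rw [mul_comm (a - b)]
    rw [canonChar_sum_eq]
    simp [sub_eq_zero]
  rw [Finset.sum_congr rfl swap2]
  have : ∀ a ∈ A, (∑ b ∈ B, if a = b then (Fintype.card F : ℂ) else 0)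
      = if a ∈ B then (Fintype.card F : ℂ) else 0 := by
    intro a _
    simp [Finset.sum_ite_eq]
  rw [Finset.sum_congr rfl this, ← Finset.sum_filter, Finset.filter_mem_eq_inter,
    Finset.inter_eq_right.mpr hBA, Finset.sum_const, nsmul_eq_mul]
  ring

lemma sum_quad_conj (Z : Finset F) :
    ∑ y : F, ((∑ x ∈ Z, canonChar p F (x * y)) *
      (starRingEnd ℂ) (∑ x ∈ Z, canonChar p F (x * y))) ^ 2 =
    (Fintype.card F : ℂ) *
      ((((Z ×ˢ Z) ×ˢ (Z ×ˢ Z)).filter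
        (fun z => z.1.1 + z.2.1 = z.1.2 + z.2.2)).card : ℂ) := by
  have h1 : ∀ y : F, (∑ x ∈ Z, canonChar p F (x * y)) *
      (starRingEnd ℂ) (∑ x ∈ Z, canonChar p F (x * y)) =
      ∑ u ∈ Z ×ˢ Z, canonChar p F ((u.1 - u.2) * y) := by
    intro y
    rw [map_sum, Finset.sum_mul_sum, Finset.sum_product]
    refine Finset.sum_congr rfl fun a _ => Finset.sum_congr rfl fun b _ => ?_
    rw [conj_canonChar, ← canonChar_add]
    congr 1
    ring
  have expand : ∀ y : F, ((∑ x ∈ Z, canonChar p F (x * y)) *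
      (starRingEnd ℂ) (∑ x ∈ Z, canonChar p F (x * y))) ^ 2 =
      ∑ z ∈ (Z ×ˢ Z) ×ˢ (Z ×ˢ Z),
        canonChar p F ((z.1.1 - z.1.2 + (z.2.1 - z.2.2)) * y) := by
    intro y
    rw [h1 y, sq, Finset.sum_mul_sum,
      Finset.sum_product (s := Z ×ˢ Z) (t := Z ×ˢ Z)
        (f := fun z => canonChar p F ((z.1.1 - z.1.2 + (z.2.1 - z.2.2)) * y))]
    refine Finset.sum_congr rfl fun u _ => Finset.sum_congr rfl fun v _ => ?_
    rw [← canonChar_add]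
    congr 1
    ring
  simp_rw [expand]
  rw [Finset.sum_comm]
  have swap2 : ∀ z ∈ (Z ×ˢ Z) ×ˢ (Z ×ˢ Z),
      ∑ y : F, canonChar p F ((z.1.1 - z.1.2 + (z.2.1 - z.2.2)) * y)
      = if z.1.1 + z.2.1 = z.1.2 + z.2.2 then (Fintype.card F : ℂ) else 0 := by
    intro z _
    simp_rw [mul_comm (z.1.1 - z.1.2 + (z.2.1 - z.2.2))]
    have hcond : (z.1.1 - z.1.2 + (z.2.1 - z.2.2) = 0) ↔
        (z.1.1 + z.2.1 = z.1.2 + z.2.2) := by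
      constructor <;> intro h <;> linear_combination h
    rw [canonChar_sum_eq, if_congr hcond rfl rfl]
  rw [Finset.sum_congr rfl swap2, ← Finset.sum_filter, Finset.sum_const, nsmul_eq_mul]
  ring
end aux

theorem konyagin_shkredov_l1_bound
    (p : ℕ) (hp : p.Prime) (F : Type*) [Field F] [Fintype F]
    [Algebra (ZMod p) F] [DecidableEq F] (X₁ X : Finset F)
    (hX₁ : X₁.Nonempty) (hsub : X₁ ⊆ X) :
    (X₁.card : ℝ) ^ 2 / (Real.sqrt X.card * Real.sqrt (addEnergy X₁)) ≤
      (1 / (Fintype.card F : ℝ)) *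
        ∑ y : F, ‖∑ x ∈ X, canonChar p F (x * y)‖ := by
  haveI : Fact p.Prime := ⟨hp⟩
  classical
  set q : ℝ := (Fintype.card F : ℝ) with hqdef
  have hq : (0:ℝ) < q := by
    simp only [hqdef]
    exact_mod_cast Fintype.card_pos
  set f : F → ℝ := fun y => ‖∑ x ∈ X, canonChar p F (x * y)‖ with hfdef
  set g : F → ℝ := fun y => ‖∑ x ∈ X₁, canonChar p F (x * y)‖ with hgdef
  have hf0 : ∀ y, 0 ≤ f y := fun y => norm_nonneg _
  have hg0 : ∀ y, 0 ≤ g y := fun y => norm_nonneg _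
  -- first moment identity
  have h1 : q * X₁.card ≤ ∑ y : F, f y * g y := by
    have hc := sum_prod_conj p F X X₁ hsub
    have habs : q * X₁.card = ‖(Fintype.card F : ℂ) * (X₁.card : ℂ)‖ := by
      rw [norm_mul, Complex.norm_natCast, Complex.norm_natCast, hqdef]
    rw [habs, ← hc]
    refine le_trans (norm_sum_le _ _) (le_of_eq ?_)
    refine Finset.sum_congr rfl fun y _ => ?_
    rw [norm_mul, Complex.norm_conj]
  -- Parseval for X
  have h2 : ∑ y : F, f y ^ 2 = q * X.card := by
    have hc := sum_prod_conj p F X X Finset.Subset.rfl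
    have : ∀ y ∈ (Finset.univ : Finset F),
        (∑ x ∈ X, canonChar p F (x * y)) *
          (starRingEnd ℂ) (∑ x ∈ X, canonChar p F (x * y)) = ((f y ^ 2 : ℝ) : ℂ) := by
      intro y _
      rw [Complex.mul_conj, Complex.normSq_eq_norm_sq]
      all_goals push_cast
      all_goals rfl
    rw [Finset.sum_congr rfl this] at hc
    have := hc
    rw [← Complex.ofReal_sum] at this
    have h' : (((∑ y : F, f y ^ 2 : ℝ)) : ℂ) = ((q * X.card : ℝ) : ℂ) := by
      rw [this]; push_cast [hqdef]; all_goals ring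
    exact_mod_cast h'
  -- Parseval (4th moment) for X₁
  have h3 : ∑ y : F, (g y ^ 2) ^ 2 = q * _root_.addEnergy X₁ := by
    have hc := sum_quad_conj p F X₁
    have : ∀ y ∈ (Finset.univ : Finset F),
        ((∑ x ∈ X₁, canonChar p F (x * y)) *
          (starRingEnd ℂ) (∑ x ∈ X₁, canonChar p F (x * y))) ^ 2
          = (((g y ^ 2) ^ 2 : ℝ) : ℂ) := by
      intro y _
      rw [Complex.mul_conj, Complex.normSq_eq_norm_sq]
      all_goals push_cast
      all_goals rfl
    rw [Finset.sum_congr rfl this] at hc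
    rw [← Complex.ofReal_sum] at hc
    have h' : (((∑ y : F, (g y ^ 2) ^ 2 : ℝ)) : ℂ) = ((q * _root_.addEnergy X₁ : ℝ) : ℂ) := by
      rw [hc]
      push_cast [hqdef, _root_.addEnergy]
      all_goals ring
    exact_mod_cast h'
  -- Cauchy-Schwarz 1
  have h4 : (∑ y : F, f y * g y) ^ 2 ≤ (∑ y : F, f y) * ∑ y : F, f y * g y ^ 2 := by
    have := Finset.sum_mul_sq_le_sq_mul_sq Finset.univ
      (fun y => Real.sqrt (f y)) (fun y => Real.sqrt (f y) * g y)
    calc (∑ y : F, f y * g y) ^ 2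
        = (∑ y : F, Real.sqrt (f y) * (Real.sqrt (f y) * g y)) ^ 2 := by
          congr 1
          refine Finset.sum_congr rfl fun y _ => ?_
          rw [← mul_assoc, Real.mul_self_sqrt (hf0 y)]
      _ ≤ (∑ y : F, Real.sqrt (f y) ^ 2) * ∑ y : F, (Real.sqrt (f y) * g y) ^ 2 := this
      _ = (∑ y : F, f y) * ∑ y : F, f y * g y ^ 2 := by
          congr 1
          · exact Finset.sum_congr rfl fun y _ => Real.sq_sqrt (hf0 y)
          · refine Finset.sum_congr rfl fun y _ => ?_
            rw [mul_pow, Real.sq_sqrt (hf0 y)]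
  -- Cauchy-Schwarz 2
  have h5 : ∑ y : F, f y * g y ^ 2 ≤
      Real.sqrt (∑ y : F, f y ^ 2) * Real.sqrt (∑ y : F, (g y ^ 2) ^ 2) :=
    Real.sum_mul_le_sqrt_mul_sqrt Finset.univ f (fun y => g y ^ 2)
  set S : ℝ := ∑ y : F, f y with hSdef
  have hS0 : 0 ≤ S := Finset.sum_nonneg fun y _ => hf0 y
  have hX0 : (0:ℝ) < X.card := by
    exact_mod_cast Finset.card_pos.mpr (hX₁.mono hsub)
  have hE0 : (0:ℝ) < _root_.addEnergy X₁ := by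
    obtain ⟨a, ha⟩ := hX₁
    have hmem : ((a, a), (a, a)) ∈ (((X₁ ×ˢ X₁) ×ˢ (X₁ ×ˢ X₁)).filter
        (fun z => z.1.1 + z.2.1 = z.1.2 + z.2.2)) := by
      simp [ha]
    exact_mod_cast Finset.card_pos.mpr ⟨_, hmem⟩
  -- combine
  have key : q ^ 2 * (X₁.card : ℝ) ^ 2 ≤
      S * (q * (Real.sqrt X.card * Real.sqrt (_root_.addEnergy X₁))) := by
    have hstep : (q * X₁.card) ^ 2 ≤ S * (Real.sqrt (q * X.card) * Real.sqrt (q * _root_.addEnergy X₁)) := by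
      calc (q * X₁.card) ^ 2 ≤ (∑ y : F, f y * g y) ^ 2 :=
            pow_le_pow_left₀ (by positivity) h1 2
        _ ≤ S * ∑ y : F, f y * g y ^ 2 := h4
        _ ≤ S * (Real.sqrt (∑ y : F, f y ^ 2) * Real.sqrt (∑ y : F, (g y ^ 2) ^ 2)) :=
            mul_le_mul_of_nonneg_left h5 hS0
        _ = S * (Real.sqrt (q * X.card) * Real.sqrt (q * _root_.addEnergy X₁)) := by rw [h2, h3]
    have hsqrt : Real.sqrt (q * X.card) * Real.sqrt (q * _root_.addEnergy X₁)
        = q * (Real.sqrt X.card * Real.sqrt (_root_.addEnergy X₁)) := by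
      rw [Real.sqrt_mul hq.le, Real.sqrt_mul hq.le]
      rw [show Real.sqrt q * Real.sqrt (X.card) * (Real.sqrt q * Real.sqrt (_root_.addEnergy X₁))
          = (Real.sqrt q * Real.sqrt q) * (Real.sqrt (X.card) * Real.sqrt (_root_.addEnergy X₁)) by ring]
      rw [Real.mul_self_sqrt hq.le]
    rw [hsqrt] at hstep
    calc q ^ 2 * (X₁.card : ℝ) ^ 2 = (q * X₁.card) ^ 2 := by ring
      _ ≤ S * (q * (Real.sqrt X.card * Real.sqrt (_root_.addEnergy X₁))) := hstep
  have hpos : (0:ℝ) < Real.sqrt X.card * Real.sqrt (_root_.addEnergy X₁) := by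
    exact mul_pos (Real.sqrt_pos.mpr hX0) (Real.sqrt_pos.mpr hE0)
  rw [div_le_iff₀ hpos]
  -- goal : X₁.card ^ 2 ≤ 1/q * S * (√|X| * √E)
  rw [show (1 / q) * S * (Real.sqrt X.card * Real.sqrt (_root_.addEnergy X₁))
      = S * (q * (Real.sqrt X.card * Real.sqrt (_root_.addEnergy X₁))) / q ^ 2 by
    field_simp]
  rw [le_div_iff₀ (by positivity)]
  calc (X₁.card : ℝ) ^ 2 * q ^ 2 = q ^ 2 * (X₁.card : ℝ) ^ 2 := by ring
    _ ≤ S * (q * (Real.sqrt X.card * Real.sqrt (_root_.addEnergy X₁))) := key
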